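/- One-step conditional unbiasedness of the auxiliary particle filter likelihood estimate: let S be a measurable space, g(y|·) : S → [0,∞) measurable, r : S → (0,∞) measurable, P, Q Markov kernels on S with P(·|x') absolutely continuous with respect to Q(·|x') for all x', points x¹,…,x^N ∈ S, and weights W¹,…,W^N ≥ 0 with ∑_k W^k = 1. Set c := ∑_{k=1}^N W^k r(x^k), assumed in (0,∞), and W^{*k} := W^k r(x^k)/c. Let I¹,…,I^N be i.i.d. with ℙ(I^i = k) = W^{*k}, and conditionally on the indices let X¹,…,X^N be independent with X^i ~ Q(·|x^{I^i}); define w^i := g(y|X^i) r(x^{I^i})^{-1} (dP(·|x^{I^i})/dQ(·|x^{I^i}))(X^i). Then 𝔼[ ((1/N) ∑_{i=1}^N w^i) · c ] = ∑_{k=1}^N W^k ∫ g(y|x) P(dx|x^k), as an identity in [0,∞]. -/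

import Mathlib

open MeasureTheory ProbabilityTheory
open scoped ENNReal NNReal

lemma apf_pi_map_eval {ι : Type*} [Fintype ι] {α : ι → Type*}
    [∀ i, MeasurableSpace (α i)] (μ : ∀ i, Measure (α i))
    [∀ i, IsProbabilityMeasure (μ i)] (i : ι) :
    (Measure.pi μ).map (Function.eval i) = μ i := by
  classical
  ext s hs
  rw [Measure.map_apply (measurable_pi_apply i) hs]
  have hpre : Function.eval i ⁻¹' s =
      Set.pi Set.univ (Function.update (fun j => Set.univ) i s) := by
    ext f
    simp only [Set.mem_preimage, Function.eval, Set.mem_pi, Set.mem_univ, true_implies,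
      Function.update_apply]
    constructor
    · intro h j
      by_cases hj : j = i
      · subst hj; simpa using h
      · simp [hj]
    · intro h
      have := h i
      simpa using this
  rw [hpre, Measure.pi_pi]
  rw [Finset.prod_eq_single i]
  · simp
  · intro j _ hj
    simp [Function.update_apply, hj]
  · simp

lemma apf_lintegral_pi_eval {ι : Type*} [Fintype ι] {α : Type*} [MeasurableSpace α]
    (μ : ι → Measure α) [∀ i, IsProbabilityMeasure (μ i)] (i : ι)
    {h : α → ℝ≥0∞} (hh : Measurable h) :
    ∫⁻ X, h (X i) ∂(Measure.pi μ) = ∫⁻ s, h s ∂(μ i) := by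
  rw [← apf_pi_map_eval μ i, lintegral_map hh (measurable_pi_apply i)]

theorem auxiliary_filter_one_step_unbiased {S : Type*} [MeasurableSpace S]
    (P Q : Kernel S S) [IsMarkovKernel P] [IsMarkovKernel Q]
    (g : S → ℝ) (hg0 : ∀ x, 0 ≤ g x) (hgm : Measurable g)
    (r : S → ℝ) (hr : ∀ x, 0 < r x) (hrm : Measurable r)
    (hac : ∀ x', P x' ≪ Q x')
    (dPQ : S → S → ℝ≥0∞) (hdm : Measurable (Function.uncurry dPQ))
    (hd : ∀ x', P x' = (Q x').withDensity (dPQ x'))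
    (N : ℕ) (x : Fin N → S) (W : Fin N → ℝ)
    (hW0 : ∀ k, 0 ≤ W k) (hW1 : ∑ k, W k = 1)
    (c : ℝ) (hc : c = ∑ k, W k * r (x k)) (hc0 : 0 < c)
    (Wstar : Fin N → ℝ) (hWstar : ∀ k, Wstar k = W k * r (x k) / c)
    (ν : Measure ((Fin N → Fin N) × (Fin N → S)))
    (hν : ν = (Measure.pi fun _ : Fin N =>
          ∑ k, ENNReal.ofReal (Wstar k) • Measure.dirac k).bind
        (fun I => (Measure.pi fun i : Fin N => Q (x (I i))).map (fun X => (I, X)))) :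
    ∫⁻ z, ((N : ℝ≥0∞)⁻¹ * ∑ i, ENNReal.ofReal (g (z.2 i)) /
          ENNReal.ofReal (r (x (z.1 i))) * dPQ (x (z.1 i)) (z.2 i)) *
        ENNReal.ofReal c ∂ν =
      ∑ k, ENNReal.ofReal (W k) * ∫⁻ s, ENNReal.ofReal (g s) ∂(P (x k)) := by
  classical
  rcases eq_or_ne N 0 with hN | hN
  · subst hN
    simp
  haveI : NeZero N := ⟨hN⟩
  -- abbreviations
  set c' : ℝ≥0∞ := ENNReal.ofReal c with hc'
  have hc'0 : c' ≠ 0 := by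
    simp [hc', ENNReal.ofReal_eq_zero, not_le, hc0]
  have hc'top : c' ≠ ∞ := ENNReal.ofReal_ne_top
  set A : Fin N → ℝ≥0∞ := fun k => ∫⁻ s, ENNReal.ofReal (g s) ∂(P (x k)) with hA
  set ψ : Fin N → ℝ≥0∞ := fun k => (ENNReal.ofReal (r (x k)))⁻¹ * A k with hψ
  -- probability measure on indices
  set m : Measure (Fin N) := ∑ k, ENNReal.ofReal (Wstar k) • Measure.dirac k with hm
  have hWstar0 : ∀ k, 0 ≤ Wstar k := fun k => by
    rw [hWstar]
    exact div_nonneg (mul_nonneg (hW0 k) (hr (x k)).le) hc0.le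
  have hWstar1 : ∑ k, Wstar k = 1 := by
    simp only [hWstar, div_eq_mul_inv]
    rw [← Finset.sum_mul, ← hc, mul_inv_cancel₀ hc0.ne']
  haveI : IsProbabilityMeasure m := by
    constructor
    rw [hm]
    simp only [Measure.coe_finset_sum, Finset.sum_apply, Measure.smul_apply,
      Measure.dirac_apply_of_mem (Set.mem_univ _), smul_eq_mul, mul_one]
    rw [← ENNReal.ofReal_sum_of_nonneg fun k _ => hWstar0 k, hWstar1, ENNReal.ofReal_one]
  -- lintegral against m
  have hm_lint : ∀ Φ : Fin N → ℝ≥0∞,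
      ∫⁻ k, Φ k ∂m = ∑ k, ENNReal.ofReal (Wstar k) * Φ k := by
    intro Φ
    rw [hm, lintegral_finset_sum_measure]
    simp [lintegral_smul_measure, lintegral_dirac]
  -- measurability of the integrand
  set f : (Fin N → Fin N) × (Fin N → S) → ℝ≥0∞ := fun z =>
    ((N : ℝ≥0∞)⁻¹ * ∑ i, ENNReal.ofReal (g (z.2 i)) /
        ENNReal.ofReal (r (x (z.1 i))) * dPQ (x (z.1 i)) (z.2 i)) * c' with hf
  have hterm : ∀ i : Fin N, Measurable fun z : (Fin N → Fin N) × (Fin N → S) =>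
      ENNReal.ofReal (g (z.2 i)) / ENNReal.ofReal (r (x (z.1 i)))
        * dPQ (x (z.1 i)) (z.2 i) := by
    intro i
    have h1 : Measurable fun z : (Fin N → Fin N) × (Fin N → S) => z.1 i :=
      (measurable_pi_apply i).comp measurable_fst
    have h2 : Measurable fun z : (Fin N → Fin N) × (Fin N → S) => z.2 i :=
      (measurable_pi_apply i).comp measurable_snd
    have hg' : Measurable fun z : (Fin N → Fin N) × (Fin N → S) =>
        ENNReal.ofReal (g (z.2 i)) :=
      (ENNReal.measurable_ofReal.comp hgm).comp h2
    have hr' : Measurable fun z : (Fin N → Fin N) × (Fin N → S) =>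
        ENNReal.ofReal (r (x (z.1 i))) :=
      (measurable_of_countable fun k : Fin N => ENNReal.ofReal (r (x k))).comp h1
    have hd' : Measurable fun z : (Fin N → Fin N) × (Fin N → S) =>
        dPQ (x (z.1 i)) (z.2 i) := by
      have : Measurable fun z : (Fin N → Fin N) × (Fin N → S) =>
          (x (z.1 i), z.2 i) :=
        ((measurable_of_countable fun k : Fin N => x k).comp h1).prodMk h2
      exact hdm.comp this
    exact (hg'.div hr').mul hd'
  have hfm : Measurable f := by
    apply Measurable.mul _ measurable_const
    exact (Finset.measurable_sum _ fun i _ => hterm i).const_mul _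
  -- the kernel is measurable (countable discrete domain)
  have hker : Measurable fun I : Fin N → Fin N =>
      (Measure.pi fun i : Fin N => Q (x (I i))).map (fun X => (I, X)) :=
    measurable_of_countable _
  rw [hν]
  rw [Measure.lintegral_bind hker.aemeasurable hfm.aemeasurable]
  -- inner integral for fixed I
  have hinner : ∀ I : Fin N → Fin N,
      ∫⁻ z, f z ∂((Measure.pi fun i : Fin N => Q (x (I i))).map (fun X => (I, X)))
        = (N : ℝ≥0∞)⁻¹ * c' * ∑ i, ψ (I i) := by
    intro I
    rw [lintegral_map hfm (measurable_prodMk_left)]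
    have hstep : ∀ X : Fin N → S, f (I, X) =
        (N : ℝ≥0∞)⁻¹ * c' * ∑ i, ENNReal.ofReal (g (X i)) /
          ENNReal.ofReal (r (x (I i))) * dPQ (x (I i)) (X i) := by
      intro X
      simp only [hf]
      ring
    simp_rw [hstep]
    rw [lintegral_const_mul]
    swap
    · exact Finset.measurable_sum _ fun i _ => by
        have := hterm i
        exact (this.comp (measurable_prodMk_left : Measurable fun X : Fin N → S => (I, X)))
    congr 1
    rw [lintegral_finset_sum]
    swap
    · intro i _
      exact (hterm i).comp (measurable_prodMk_left : Measurable fun X : Fin N → S => (I, X))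
    refine Finset.sum_congr rfl fun i _ => ?_
    have hh : Measurable fun s : S => ENNReal.ofReal (g s) /
        ENNReal.ofReal (r (x (I i))) * dPQ (x (I i)) s := by
      exact ((ENNReal.measurable_ofReal.comp hgm).div measurable_const).mul
        (hdm.of_uncurry_left)
    rw [apf_lintegral_pi_eval (fun j : Fin N => Q (x (I j))) i hh]
    -- now compute the one-dimensional integral
    rw [hψ]
    simp only [div_eq_mul_inv]
    have : ∀ s : S, ENNReal.ofReal (g s) * (ENNReal.ofReal (r (x (I i))))⁻¹
        * dPQ (x (I i)) s = (ENNReal.ofReal (r (x (I i))))⁻¹ *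
          (ENNReal.ofReal (g s) * dPQ (x (I i)) s) := by
      intro s; ring
    simp_rw [this]
    rw [lintegral_const_mul' _ _ (ENNReal.inv_ne_top.2 (by
      simp [ENNReal.ofReal_eq_zero, not_le, hr (x (I i))]))]
    congr 1
    show _ = ∫⁻ s, ENNReal.ofReal (g s) ∂(P (x (I i)))
    have hgE : Measurable fun s : S => ENNReal.ofReal (g s) :=
      ENNReal.measurable_ofReal.comp hgm
    rw [hd (x (I i)), lintegral_withDensity_eq_lintegral_mul _ hdm.of_uncurry_left hgE]
    exact lintegral_congr fun a => by simp [Pi.mul_apply, mul_comm]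
  simp_rw [hinner]
  rw [lintegral_const_mul' _ _ (ENNReal.mul_ne_top
    (ENNReal.inv_ne_top.2 (by exact_mod_cast hN)) hc'top)]
  have hψi : ∀ i ∈ (Finset.univ : Finset (Fin N)),
      Measurable fun I : Fin N → Fin N => ψ (I i) := fun i _ => measurable_of_countable _
  rw [lintegral_finset_sum _ hψi]
  have hmarg : ∀ i : Fin N, ∫⁻ I, ψ (I i) ∂(Measure.pi fun _ : Fin N => m)
      = ∑ k, ENNReal.ofReal (Wstar k) * ψ k := by
    intro i
    rw [apf_lintegral_pi_eval (fun _ : Fin N => m) i (measurable_of_countable ψ)]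
    exact hm_lint ψ
  simp_rw [hmarg]
  rw [Finset.sum_const, Finset.card_univ, Fintype.card_fin, nsmul_eq_mul]
  -- cancel N
  rw [show (N : ℝ≥0∞)⁻¹ * c' * ((N : ℝ≥0∞) * ∑ k, ENNReal.ofReal (Wstar k) * ψ k)
      = ((N : ℝ≥0∞)⁻¹ * (N : ℝ≥0∞)) * (c' * ∑ k, ENNReal.ofReal (Wstar k) * ψ k) by ring]
  rw [ENNReal.inv_mul_cancel (by exact_mod_cast hN) (by simp), one_mul]
  rw [Finset.mul_sum]
  refine Finset.sum_congr rfl fun k _ => ?_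
  -- termwise algebra
  rw [hψ, hWstar]
  have hrpos := hr (x k)
  rw [ENNReal.ofReal_div_of_pos hc0, ENNReal.ofReal_mul (hW0 k)]
  have hr0 : ENNReal.ofReal (r (x k)) ≠ 0 := by
    simp [ENNReal.ofReal_eq_zero, not_le, hrpos]
  have hrtop : ENNReal.ofReal (r (x k)) ≠ ∞ := ENNReal.ofReal_ne_top
  rw [ENNReal.div_eq_inv_mul]
  calc c' * ((ENNReal.ofReal c)⁻¹ * (ENNReal.ofReal (W k) * ENNReal.ofReal (r (x k))) *
        ((ENNReal.ofReal (r (x k)))⁻¹ * A k))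
      = (c' * (ENNReal.ofReal c)⁻¹) *
        (ENNReal.ofReal (r (x k)) * (ENNReal.ofReal (r (x k)))⁻¹) *
        (ENNReal.ofReal (W k) * A k) := by ring
    _ = ENNReal.ofReal (W k) * A k := by
        rw [ENNReal.mul_inv_cancel hc'0 hc'top, ENNReal.mul_inv_cancel hr0 hrtop]
        simp
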